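/- Let I ⊊ J ⊆ S be monomial complete intersection ideals. Then sdepth_S(J/I) ≥ depth_S(J/I); i.e., the Stanley conjecture holds for quotients of complete intersection monomial ideals. -/

import Mathlib

/- Combinatorial formalization of Stanley depth for quotients `J/I` of monomial
ideals in `S = K[x_1,...,x_n]`: monomials are identified with their exponent
vectors in `Fin n → ℕ`, the `ℤⁿ`-graded module `J/I` is identified with the set
of exponent vectors of monomials in `J \ I`, and a Stanley decomposition
`⊕ uᵢ K[Zᵢ]` is identified with a partition of this set into "intervals"
`{b | aᵢ ≤ b ∧ (b = aᵢ outside Zᵢ)}` (the exponent set of `x^{aᵢ} K[Zᵢ]`).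
This correspondence is exact and the resulting Stanley depth is independent of
the field `K`. `sdepthOn V M` is the Stanley depth of `M` as a module over the
polynomial subring on the variables in `V` (e.g. `S' = K[x_2,...,x_n]`). -/

/-- The set of exponent vectors of the Stanley space `x^a · K[Z]`. -/
def SInterval {n : ℕ} (a : Fin n → ℕ) (Z : Finset (Fin n)) : Set (Fin n → ℕ) :=
  {b | a ≤ b ∧ ∀ i ∉ Z, b i = a i}

/-- A (combinatorial) Stanley decomposition of the set `M` of exponent vectors,
using only variables from `V`. -/
def IsStanleyDecompOn {n : ℕ} (V : Finset (Fin n)) (M : Set (Fin n → ℕ)) {r : ℕ}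
    (a : Fin r → Fin n → ℕ) (Z : Fin r → Finset (Fin n)) : Prop :=
  (∀ i, Z i ⊆ V) ∧ (∀ i, SInterval (a i) (Z i) ⊆ M) ∧
    (∀ x ∈ M, ∃ i, x ∈ SInterval (a i) (Z i)) ∧
    ∀ i j, i ≠ j → Disjoint (SInterval (a i) (Z i)) (SInterval (a j) (Z j))

/-- The Stanley depth of `M`, viewed over the polynomial ring on the variables in `V`. -/
noncomputable def sdepthOn {n : ℕ} (V : Finset (Fin n)) (M : Set (Fin n → ℕ)) : ℕ :=
  sSup {d | ∃ (r : ℕ), 0 < r ∧ ∃ (a : Fin r → Fin n → ℕ) (Z : Fin r → Finset (Fin n)),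
    IsStanleyDecompOn V M a Z ∧ ∀ i, d ≤ (Z i).card}

/-- The Stanley depth over the full polynomial ring `S = K[x_1,...,x_n]`. -/
noncomputable def sdepth {n : ℕ} (M : Set (Fin n → ℕ)) : ℕ := sdepthOn Finset.univ M

/-- Exponent vectors of the monomial ideal generated by the monomials `x^a`, `a ∈ A`. -/
def upSet {n : ℕ} (A : Set (Fin n → ℕ)) : Set (Fin n → ℕ) := {c | ∃ a ∈ A, a ≤ c}

/-- `M` is the set of exponent vectors of the monomials of a monomial ideal. -/
def IsMonomialIdealSet {n : ℕ} (M : Set (Fin n → ℕ)) : Prop :=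
  ∀ a ∈ M, ∀ b, a ≤ b → b ∈ M

/-- All monomials of `M` only involve the variables in `V`. -/
def SupportedOn {n : ℕ} (V : Finset (Fin n)) (M : Set (Fin n → ℕ)) : Prop :=
  ∀ c ∈ M, ∀ i ∉ V, c i = 0

/-- The support of a monomial. -/
def msupp {n : ℕ} (u : Fin n → ℕ) : Finset (Fin n) :=
  Finset.univ.filter fun i => u i ≠ 0

/-- A regular sequence of monomials: monic nonunit monomials with pairwise
disjoint supports. -/
def IsRegSeqM {n m : ℕ} (u : Fin m → Fin n → ℕ) : Prop :=
  (∀ j, u j ≠ 0) ∧ ∀ j k, j ≠ k → Disjoint (msupp (u j)) (msupp (u k))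

noncomputable section
open Finset
open scoped Classical

namespace S16

variable {n p q : ℕ}

/-- first coordinate where `c` fails to dominate `w` -/
def fc (hn : 0 < n) (w c : Fin n → ℕ) : Fin n :=
  if h : (univ.filter fun i => c i < w i).Nonempty then (univ.filter fun i => c i < w i).min' h
  else ⟨0, hn⟩

lemma fc_spec (hn : 0 < n) {w c : Fin n → ℕ} (h : ¬ w ≤ c) :
    c (fc hn w c) < w (fc hn w c) ∧ ∀ i < fc hn w c, w i ≤ c i := by
  have hne : (univ.filter fun i => c i < w i).Nonempty := by
    rw [Pi.le_def, not_forall] at h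
    obtain ⟨i, hi⟩ := h
    exact ⟨i, by simp [not_le.mp hi]⟩
  rw [fc, dif_pos hne]
  constructor
  · have := Finset.min'_mem _ hne
    simpa using this
  · intro i hi
    by_contra hlt
    exact absurd (Finset.min'_le _ i (by simp [not_le.mp hlt])) (not_le.mpr hi)

lemma fc_eq (hn : 0 < n) {w c b : Fin n → ℕ}
    (hb1 : b (fc hn w c) < w (fc hn w c)) (hb2 : ∀ i < fc hn w c, w i ≤ b i) :
    fc hn w b = fc hn w c := by
  have hne : (univ.filter fun i => b i < w i).Nonempty := ⟨fc hn w c, by simp [hb1]⟩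
  rw [fc, dif_pos hne]
  apply le_antisymm
  · exact Finset.min'_le _ _ (by simp [hb1])
  · apply Finset.le_min'
    intro i hi
    simp only [mem_filter, mem_univ, true_and] at hi
    by_contra hlt
    exact absurd (hb2 i (not_le.mp hlt)) (not_le.mpr hi)

/-- least index `j` with `u j ≤ c` -/
def jc (hq : 0 < q) (u : Fin q → Fin n → ℕ) (c : Fin n → ℕ) : Fin q :=
  if h : (univ.filter fun j => u j ≤ c).Nonempty then (univ.filter fun j => u j ≤ c).min' h
  else ⟨0, hq⟩

lemma jc_spec (hq : 0 < q) {u : Fin q → Fin n → ℕ} {c : Fin n → ℕ}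
    (hc : c ∈ upSet (Set.range u)) :
    u (jc hq u c) ≤ c ∧ ∀ j' < jc hq u c, ¬ u j' ≤ c := by
  obtain ⟨w, ⟨j, rfl⟩, hle⟩ := hc
  have hne : (univ.filter fun j => u j ≤ c).Nonempty := ⟨j, by simp [hle]⟩
  rw [jc, dif_pos hne]
  constructor
  · have := Finset.min'_mem _ hne
    simpa using this
  · intro j' hj' hle'
    exact absurd (Finset.min'_le _ j' (by simp [hle'])) (not_le.mpr hj')

lemma jc_eq (hq : 0 < q) {u : Fin q → Fin n → ℕ} {c b : Fin n → ℕ}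
    (hb1 : u (jc hq u c) ≤ b) (hb2 : ∀ j' < jc hq u c, ¬ u j' ≤ b) :
    jc hq u b = jc hq u c := by
  have hne : (univ.filter fun j => u j ≤ b).Nonempty := ⟨jc hq u c, by simp [hb1]⟩
  rw [jc, dif_pos hne]
  apply le_antisymm
  · exact Finset.min'_le _ _ (by simp [hb1])
  · apply Finset.le_min'
    intro j hj
    simp only [mem_filter, mem_univ, true_and] at hj
    by_contra hlt
    exact absurd hj (hb2 j (not_le.mp hlt))

/-- active `v` indices -/
def Kc (hq : 0 < q) (hpq : p ≤ q) (u : Fin q → Fin n → ℕ) (c : Fin n → ℕ) : Finset (Fin p) :=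
  univ.filter fun k => jc hq u c ≤ Fin.castLE hpq k

/-- the fixed ("bad") coordinates -/
def Bc (hq : 0 < q) (hn : 0 < n) (hpq : p ≤ q) (u : Fin q → Fin n → ℕ)
    (v : Fin p → Fin n → ℕ) (c : Fin n → ℕ) : Finset (Fin n) :=
  ((univ.filter fun j' => j' < jc hq u c).image fun j' => fc hn (u j') c) ∪
    ((Kc hq hpq u c).image fun k => fc hn (v k) c)

/-- the lower bound on free coordinates -/
def lbc (hq : 0 < q) (hn : 0 < n) (hpq : p ≤ q) (u : Fin q → Fin n → ℕ)
    (v : Fin p → Fin n → ℕ) (c : Fin n → ℕ) (i : Fin n) : ℕ :=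
  max (u (jc hq u c) i)
    (max ((univ.filter fun j' => j' < jc hq u c).sup fun j' =>
        if i < fc hn (u j') c then u j' i else 0)
      ((Kc hq hpq u c).sup fun k => if i < fc hn (v k) c then v k i else 0))

def ac (hq : 0 < q) (hn : 0 < n) (hpq : p ≤ q) (u : Fin q → Fin n → ℕ)
    (v : Fin p → Fin n → ℕ) (c : Fin n → ℕ) (i : Fin n) : ℕ :=
  if i ∈ Bc hq hn hpq u v c then c i else lbc hq hn hpq u v c i

def Zc (hq : 0 < q) (hn : 0 < n) (hpq : p ≤ q) (u : Fin q → Fin n → ℕ)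
    (v : Fin p → Fin n → ℕ) (c : Fin n → ℕ) : Finset (Fin n) :=
  univ \ Bc hq hn hpq u v c
variable {hq : 0 < q} {hn : 0 < n} {hpq : p ≤ q}
variable {u : Fin q → Fin n → ℕ} {v : Fin p → Fin n → ℕ} {c : Fin n → ℕ}

lemma not_vle_of_mem (hc : c ∈ upSet (Set.range u) \ upSet (Set.range v)) (k : Fin p) :
    ¬ v k ≤ c := fun hle => hc.2 ⟨v k, ⟨k, rfl⟩, hle⟩

lemma lbc_le (hc : c ∈ upSet (Set.range u) \ upSet (Set.range v)) (i : Fin n) :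
    lbc hq hn hpq u v c i ≤ c i := by
  have hjc := jc_spec hq hc.1
  refine max_le (hjc.1 i) (max_le (Finset.sup_le ?_) (Finset.sup_le ?_))
  · intro j' hj'
    simp only [mem_filter, mem_univ, true_and] at hj'
    split_ifs with h
    · exact (fc_spec hn (hjc.2 j' hj')).2 i h
    · exact Nat.zero_le _
  · intro k _
    split_ifs with h
    · exact (fc_spec hn (not_vle_of_mem hc k)).2 i h
    · exact Nat.zero_le _

lemma self_mem (hc : c ∈ upSet (Set.range u) \ upSet (Set.range v)) :
    c ∈ SInterval (ac hq hn hpq u v c) (Zc hq hn hpq u v c) := by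
  constructor
  · intro i
    rw [ac]
    split_ifs with h
    · exact le_refl _
    · exact lbc_le hc i
  · intro i hi
    have hiB : i ∈ Bc hq hn hpq u v c := by
      by_contra hiB
      exact hi (by simp [Zc, hiB])
    rw [ac, if_pos hiB]

lemma stable (hdom : ∀ k : Fin p, u (Fin.castLE hpq k) ≤ v k)
    (hc : c ∈ upSet (Set.range u) \ upSet (Set.range v)) {b : Fin n → ℕ}
    (hb : b ∈ SInterval (ac hq hn hpq u v c) (Zc hq hn hpq u v c)) :
    b ∈ upSet (Set.range u) \ upSet (Set.range v) ∧
      ac hq hn hpq u v b = ac hq hn hpq u v c ∧ Zc hq hn hpq u v b = Zc hq hn hpq u v c := by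
  obtain ⟨hble, hbeq⟩ := hb
  have hB : ∀ i ∈ Bc hq hn hpq u v c, b i = c i := by
    intro i hi
    have := hbeq i (by simp [Zc, hi])
    rwa [ac, if_pos hi] at this
  have hZ : ∀ i, i ∉ Bc hq hn hpq u v c → lbc hq hn hpq u v c i ≤ b i := by
    intro i hi
    have := hble i
    rwa [ac, if_neg hi] at this
  have hjc := jc_spec hq hc.1
  have h1 : u (jc hq u c) ≤ b := by
    intro i
    by_cases hiB : i ∈ Bc hq hn hpq u v c
    · rw [hB i hiB]; exact hjc.1 i
    · exact le_trans (le_max_left _ _) (hZ i hiB)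
  have h2 : ∀ j' < jc hq u c,
      b (fc hn (u j') c) < u j' (fc hn (u j') c) ∧ ∀ i < fc hn (u j') c, u j' i ≤ b i := by
    intro j' hj'
    have hfc := fc_spec hn (hjc.2 j' hj')
    have hmem : fc hn (u j') c ∈ Bc hq hn hpq u v c :=
      Finset.mem_union_left _ (Finset.mem_image.mpr ⟨j', by simp [hj'], rfl⟩)
    refine ⟨by rw [hB _ hmem]; exact hfc.1, ?_⟩
    intro i hi
    by_cases hiB : i ∈ Bc hq hn hpq u v c
    · rw [hB _ hiB]; exact hfc.2 i hi
    · refine le_trans ?_ (hZ i hiB)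
      calc u j' i = if i < fc hn (u j') c then u j' i else 0 := (if_pos hi).symm
        _ ≤ (univ.filter fun j'' => j'' < jc hq u c).sup
              (fun j'' => if i < fc hn (u j'') c then u j'' i else 0) :=
            Finset.le_sup (f := fun j'' => if i < fc hn (u j'') c then u j'' i else 0) (Finset.mem_filter.mpr ⟨Finset.mem_univ _, hj'⟩)
        _ ≤ lbc hq hn hpq u v c i := le_trans (le_max_left _ _) (le_max_right _ _)
  have h3 : ∀ k ∈ Kc hq hpq u c,
      b (fc hn (v k) c) < v k (fc hn (v k) c) ∧ ∀ i < fc hn (v k) c, v k i ≤ b i := by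
    intro k hk
    have hfc := fc_spec hn (not_vle_of_mem hc k)
    have hmem : fc hn (v k) c ∈ Bc hq hn hpq u v c :=
      Finset.mem_union_right _ (Finset.mem_image.mpr ⟨k, hk, rfl⟩)
    refine ⟨by rw [hB _ hmem]; exact hfc.1, ?_⟩
    intro i hi
    by_cases hiB : i ∈ Bc hq hn hpq u v c
    · rw [hB _ hiB]; exact hfc.2 i hi
    · refine le_trans ?_ (hZ i hiB)
      calc v k i = if i < fc hn (v k) c then v k i else 0 := (if_pos hi).symm
        _ ≤ (Kc hq hpq u c).sup (fun k' => if i < fc hn (v k') c then v k' i else 0) :=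
            Finset.le_sup (f := fun k' => if i < fc hn (v k') c then v k' i else 0) hk
        _ ≤ lbc hq hn hpq u v c i := le_trans (le_max_right _ _) (le_max_right _ _)
  have not_ule : ∀ j' < jc hq u c, ¬ u j' ≤ b := fun j' hj' hle =>
    absurd (hle _) (not_le.mpr (h2 j' hj').1)
  have not_vle : ∀ k, ¬ v k ≤ b := by
    intro k
    by_cases hk : k ∈ Kc hq hpq u c
    · exact fun hle => absurd (hle _) (not_le.mpr (h3 k hk).1)
    · have hlt : Fin.castLE hpq k < jc hq u c := by
        by_contra hge
        exact hk (Finset.mem_filter.mpr ⟨Finset.mem_univ _, not_lt.mp hge⟩)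
      exact fun hle => not_ule _ hlt (le_trans (hdom k) hle)
  have hmemM : b ∈ upSet (Set.range u) \ upSet (Set.range v) := by
    refine ⟨⟨u (jc hq u c), ⟨_, rfl⟩, h1⟩, ?_⟩
    rintro ⟨w, ⟨k, rfl⟩, hle⟩
    exact not_vle k hle
  have hjcb : jc hq u b = jc hq u c := jc_eq hq h1 not_ule
  have hfcb : ∀ j' < jc hq u c, fc hn (u j') b = fc hn (u j') c := fun j' hj' =>
    fc_eq hn (h2 j' hj').1 (h2 j' hj').2
  have hgcb : ∀ k ∈ Kc hq hpq u c, fc hn (v k) b = fc hn (v k) c := fun k hk =>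
    fc_eq hn (h3 k hk).1 (h3 k hk).2
  have hKcb : Kc hq hpq u b = Kc hq hpq u c := by
    unfold Kc; rw [hjcb]
  have hBcb : Bc hq hn hpq u v b = Bc hq hn hpq u v c := by
    unfold Bc
    rw [hjcb, hKcb]
    refine congrArg₂ (· ∪ ·) (Finset.image_congr ?_) (Finset.image_congr ?_)
    · intro j' hj'
      simp only [Finset.coe_filter, Set.mem_setOf_eq, Finset.mem_univ, true_and] at hj'
      exact hfcb j' hj'
    · intro k hk
      exact hgcb k (by simpa using hk)
  have hlbcb : lbc hq hn hpq u v b = lbc hq hn hpq u v c := by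
    funext i
    unfold lbc
    rw [hjcb, hKcb]
    refine congrArg₂ max rfl (congrArg₂ max ?_ ?_)
    · refine Finset.sup_congr rfl ?_
      intro j' hj'
      simp only [mem_filter, mem_univ, true_and] at hj'
      rw [hfcb j' hj']
    · refine Finset.sup_congr rfl ?_
      intro k hk
      rw [hgcb k hk]
  have hacb : ac hq hn hpq u v b = ac hq hn hpq u v c := by
    funext i
    rw [ac, ac, hBcb, hlbcb]
    split_ifs with h
    · exact hB i h
    · rfl
  exact ⟨hmemM, hacb, by unfold Zc; rw [hBcb]⟩
lemma card_Zc (hqn : q ≤ n) :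
    (if p < q then n - q + 1 else n - q) ≤ (Zc hq hn hpq u v c).card := by
  set j0 := jc hq u c with hj0
  set ψ : Fin q → Fin n := fun j'' =>
    if j'' < j0 then fc hn (u j'') c
    else if h : (j'' : ℕ) < p then fc hn (v ⟨(j'' : ℕ), h⟩) c else ⟨0, hn⟩ with hψ
  set T : Finset (Fin q) :=
    (univ.filter fun j'' => j'' < j0) ∪ ((Kc hq hpq u c).image (Fin.castLE hpq)) with hT
  have hsub : Bc hq hn hpq u v c ⊆ T.image ψ := by
    intro x hx
    rcases Finset.mem_union.mp hx with hx | hx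
    · obtain ⟨j', hj', rfl⟩ := Finset.mem_image.mp hx
      refine Finset.mem_image.mpr ⟨j', Finset.mem_union_left _ hj', ?_⟩
      simp only [mem_filter, mem_univ, true_and] at hj'
      simp [hψ, hj0, hj']
    · obtain ⟨k, hk, rfl⟩ := Finset.mem_image.mp hx
      refine Finset.mem_image.mpr
        ⟨Fin.castLE hpq k, Finset.mem_union_right _ (Finset.mem_image_of_mem _ hk), ?_⟩
      have hge : j0 ≤ Fin.castLE hpq k := by
        have := Finset.mem_filter.mp hk
        exact this.2
      have hklt : ((Fin.castLE hpq k : Fin q) : ℕ) < p := k.isLt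
      rw [hψ]
      simp only [not_lt.mpr hge, if_false, dif_pos hklt]
      rfl
  have hBcard : (Bc hq hn hpq u v c).card ≤ T.card :=
    le_trans (Finset.card_le_card hsub) (Finset.card_image_le)
  have hZcard : (Zc hq hn hpq u v c).card = n - (Bc hq hn hpq u v c).card := by
    rw [Zc, Finset.card_sdiff_of_subset (Finset.subset_univ _)]
    simp
  by_cases hpe : p < q
  · have hlast : (⟨q - 1, by omega⟩ : Fin q) ∉ T := by
      intro hmem
      rcases Finset.mem_union.mp hmem with h | h
      · have := (Finset.mem_filter.mp h).2
        have h1 : (q - 1 : ℕ) < (j0 : ℕ) := this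
        have := j0.isLt
        omega
      · obtain ⟨k, _, hk⟩ := Finset.mem_image.mp h
        have : ((Fin.castLE hpq k : Fin q) : ℕ) = (k : ℕ) := rfl
        have hv : (k : ℕ) = q - 1 := by
          rw [← this, hk]
        have := k.isLt
        omega
    have hTcard : T.card ≤ q - 1 := by
      have hsub2 : T ⊆ univ.erase ⟨q - 1, by omega⟩ := by
        intro x hx
        exact Finset.mem_erase.mpr ⟨fun h => hlast (h ▸ hx), Finset.mem_univ _⟩
      calc T.card ≤ (univ.erase (⟨q - 1, by omega⟩ : Fin q)).card := Finset.card_le_card hsub2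
        _ = q - 1 := by rw [Finset.card_erase_of_mem (Finset.mem_univ _)]; simp
    rw [if_pos hpe, hZcard]
    omega
  · have hTcard : T.card ≤ q := le_trans (Finset.card_le_univ _) (by simp)
    rw [if_neg hpe, hZcard]
    omega

lemma ac_le_bb (hc : c ∈ upSet (Set.range u) \ upSet (Set.range v)) (i : Fin n) :
    ac hq hn hpq u v c i ≤
      max (univ.sup fun j => univ.sup (u j)) (univ.sup fun k => univ.sup (v k)) := by
  have hjc := jc_spec hq hc.1
  have hub : ∀ (j : Fin q) (i' : Fin n), u j i' ≤
      max (univ.sup fun j => univ.sup (u j)) (univ.sup fun k => univ.sup (v k)) := by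
    intro j i'
    exact le_trans (le_trans (Finset.le_sup (f := u j) (Finset.mem_univ i'))
      (Finset.le_sup (f := fun j => univ.sup (u j)) (Finset.mem_univ j))) (le_max_left _ _)
  have hvb : ∀ (k : Fin p) (i' : Fin n), v k i' ≤
      max (univ.sup fun j => univ.sup (u j)) (univ.sup fun k => univ.sup (v k)) := by
    intro k i'
    exact le_trans (le_trans (Finset.le_sup (f := v k) (Finset.mem_univ i'))
      (Finset.le_sup (f := fun k => univ.sup (v k)) (Finset.mem_univ k))) (le_max_right _ _)
  rw [ac]
  split_ifs with h
  · rcases Finset.mem_union.mp h with h | h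
    · obtain ⟨j', hj', rfl⟩ := Finset.mem_image.mp h
      simp only [mem_filter, mem_univ, true_and] at hj'
      exact le_trans (le_of_lt (fc_spec hn (hjc.2 j' hj')).1) (hub j' _)
    · obtain ⟨k, _, rfl⟩ := Finset.mem_image.mp h
      exact le_trans (le_of_lt (fc_spec hn (not_vle_of_mem hc k)).1) (hvb k _)
  · refine max_le (hub _ i) (max_le (Finset.sup_le ?_) (Finset.sup_le ?_))
    · intro j' _
      split_ifs
      · exact hub j' i
      · exact Nat.zero_le _
    · intro k _
      split_ifs
      · exact hvb k i
      · exact Nat.zero_le _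
theorem aux {n p q : ℕ} (hq : 0 < q) (hn : 0 < n) (hqn : q ≤ n) (hpq : p ≤ q)
    (u : Fin q → Fin n → ℕ) (v : Fin p → Fin n → ℕ)
    (hdom : ∀ k : Fin p, u (Fin.castLE hpq k) ≤ v k)
    (hMne : (upSet (Set.range u) \ upSet (Set.range v)).Nonempty) :
    (if p < q then n - q + 1 else n - q) ≤
      sdepth (upSet (Set.range u) \ upSet (Set.range v)) := by
  set M := upSet (Set.range u) \ upSet (Set.range v) with hM
  set D : Set ((Fin n → ℕ) × Finset (Fin n)) :=
    {d | ∃ c ∈ M, ac hq hn hpq u v c = d.1 ∧ Zc hq hn hpq u v c = d.2} with hD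
  have hDfin : D.Finite := by
    set BB := max (univ.sup fun j => univ.sup (u j)) (univ.sup fun k => univ.sup (v k)) with hBB
    have h1 : ({A : Fin n → ℕ | ∀ i, A i ≤ BB}).Finite := by
      apply Set.Finite.subset (Set.Finite.pi (fun _ : Fin n => Set.finite_Iic BB))
      intro A hA
      rw [Set.mem_pi]
      intro i _
      exact hA i
    apply Set.Finite.subset (h1.prod Set.finite_univ)
    rintro ⟨A, Z⟩ ⟨c, hc, h1', h2'⟩
    refine ⟨fun i => ?_, Set.mem_univ _⟩
    rw [← h1']
    exact ac_le_bb hc i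
  set F := hDfin.toFinset with hF
  have hFne : F.Nonempty := by
    obtain ⟨c, hc⟩ := hMne
    exact ⟨(ac hq hn hpq u v c, Zc hq hn hpq u v c), by
      rw [hF, Set.Finite.mem_toFinset]; exact ⟨c, hc, rfl, rfl⟩⟩
  have hr : 0 < F.card := Finset.card_pos.mpr hFne
  let e : Fin F.card ≃ ↥F := (Fintype.equivFinOfCardEq (Fintype.card_coe F)).symm
  set A : Fin F.card → (Fin n → ℕ) := fun i => ((e i : (Fin n → ℕ) × Finset (Fin n))).1 with hA
  set Z : Fin F.card → Finset (Fin n) := fun i => ((e i : (Fin n → ℕ) × Finset (Fin n))).2 with hZ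
  have hwit : ∀ i, ∃ c ∈ M, ac hq hn hpq u v c = A i ∧ Zc hq hn hpq u v c = Z i := by
    intro i
    have := (e i).2
    rw [Set.Finite.mem_toFinset] at this
    obtain ⟨c, hc, h1', h2'⟩ := this
    exact ⟨c, hc, h1', h2'⟩
  choose cw hcw hc1 hc2 using hwit
  have hdecomp : IsStanleyDecompOn Finset.univ M A Z := by
    refine ⟨fun i => Finset.subset_univ _, ?_, ?_, ?_⟩
    · intro i x hx
      rw [← hc1 i, ← hc2 i] at hx
      exact (stable hdom (hcw i) hx).1
    · intro x hx
      have hmem : (ac hq hn hpq u v x, Zc hq hn hpq u v x) ∈ F := by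
        rw [hF, Set.Finite.mem_toFinset]
        exact ⟨x, hx, rfl, rfl⟩
      refine ⟨e.symm ⟨_, hmem⟩, ?_⟩
      have he : e (e.symm ⟨_, hmem⟩) = ⟨(ac hq hn hpq u v x, Zc hq hn hpq u v x), hmem⟩ :=
        Equiv.apply_symm_apply _ _
      have hA' : A (e.symm ⟨_, hmem⟩) = ac hq hn hpq u v x := by rw [hA]; simp only [he]
      have hZ' : Z (e.symm ⟨_, hmem⟩) = Zc hq hn hpq u v x := by rw [hZ]; simp only [he]
      rw [hA', hZ']
      exact self_mem hx
    · intro i j hij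
      rw [Set.disjoint_left]
      intro x hxi hxj
      have hxi' := hxi; have hxj' := hxj
      rw [← hc1 i, ← hc2 i] at hxi'
      rw [← hc1 j, ← hc2 j] at hxj'
      have si := stable hdom (hcw i) hxi'
      have sj := stable hdom (hcw j) hxj'
      have heq : (e i : (Fin n → ℕ) × Finset (Fin n)) = (e j : (Fin n → ℕ) × Finset (Fin n)) := by
        have : (A i, Z i) = (A j, Z j) := by
          rw [← hc1 i, ← hc2 i, ← hc1 j, ← hc2 j, ← si.2.1, ← si.2.2, ← sj.2.1, ← sj.2.2]
        rw [hA, hZ] at this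
        exact Prod.ext (congrArg Prod.fst this) (congrArg Prod.snd this)
      exact hij (e.injective (Subtype.ext heq))
  have hcard : ∀ i, (if p < q then n - q + 1 else n - q) ≤ (Z i).card := by
    intro i
    rw [← hc2 i]
    exact card_Zc hqn
  rw [sdepth, sdepthOn]
  apply le_csSup
  · refine ⟨n, ?_⟩
    rintro d ⟨r, hr0, a', Z', _, hcard'⟩
    exact le_trans (hcard' ⟨0, hr0⟩) (le_trans (Finset.card_le_univ _) (by simp))
  · exact ⟨F.card, hr, A, Z, hdecomp, hcard⟩
lemma upSet_empty {n : ℕ} : upSet (∅ : Set (Fin n → ℕ)) = ∅ := by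
  ext x; simp [upSet]

end S16

open Finset in
/-- the Stanley conjecture for quotients of monomial complete
intersections: `sdepth_S(J/I) ≥ depth_S(J/I)`, where
`depth_S(J/I) = n - q + 1` if `q > p` and `n - q` if `q = p`. -/
theorem stmt_16 {n p q : ℕ} (hpq : p ≤ q)
    (u : Fin q → Fin n → ℕ) (v : Fin p → Fin n → ℕ)
    (hu : IsRegSeqM u) (hv : IsRegSeqM v)
    (hsub : upSet (Set.range v) ⊆ upSet (Set.range u))
    (hne : upSet (Set.range v) ≠ upSet (Set.range u)) :
    (if p < q then n - q + 1 else n - q) ≤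
      sdepth (upSet (Set.range u) \ upSet (Set.range v)) := by
  classical
  rcases Nat.eq_zero_or_pos q with hq0 | hq
  · exfalso
    apply hne
    have hp0 : p = 0 := by omega
    subst hq0; subst hp0
    rw [Set.range_eq_empty u, Set.range_eq_empty v]
  have hqn : q ≤ n := by
    have hex : ∀ j : Fin q, ∃ i, u j i ≠ 0 := fun j => Function.ne_iff.mp (hu.1 j)
    choose φ hφ using hex
    have hinj : Function.Injective φ := by
      intro j j' h
      by_contra hne'
      have h1 : φ j ∈ msupp (u j) := Finset.mem_filter.mpr ⟨Finset.mem_univ _, hφ j⟩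
      have h2 : φ j ∈ msupp (u j') := Finset.mem_filter.mpr ⟨Finset.mem_univ _, h ▸ hφ j'⟩
      exact Finset.disjoint_left.mp (hu.2 j j' hne') h1 h2
    simpa using Fintype.card_le_of_injective φ hinj
  have hn : 0 < n := lt_of_lt_of_le hq hqn
  have hex : ∀ k : Fin p, ∃ j : Fin q, u j ≤ v k := by
    intro k
    obtain ⟨w, ⟨j, rfl⟩, hle⟩ := hsub ⟨v k, ⟨k, rfl⟩, le_refl _⟩
    exact ⟨j, hle⟩
  choose σ hσle using hex
  have hσinj : Function.Injective σ := by
    intro k k' hkk'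
    by_contra hne'
    obtain ⟨i, hi⟩ := Function.ne_iff.mp (hu.1 (σ k))
    simp only [Pi.zero_apply] at hi
    have ha1 : u (σ k) i ≤ v k i := hσle k i
    have ha2 : u (σ k) i ≤ v k' i := by
      have := hσle k' i
      rwa [← hkk'] at this
    have h1 : i ∈ msupp (v k) := by
      rw [msupp, Finset.mem_filter]
      exact ⟨Finset.mem_univ _, by omega⟩
    have h2 : i ∈ msupp (v k') := by
      rw [msupp, Finset.mem_filter]
      exact ⟨Finset.mem_univ _, by omega⟩
    exact Finset.disjoint_left.mp (hv.2 k k' hne') h1 h2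
  let e2 : Fin p ≃ {j : Fin q // (j : ℕ) < p} :=
    { toFun := fun k => ⟨Fin.castLE hpq k, k.isLt⟩
      invFun := fun j => ⟨(j : Fin q).1, j.2⟩
      left_inv := fun k => rfl
      right_inv := fun j => rfl }
  let e0 : {j : Fin q // j ∈ Set.range σ} ≃ {j : Fin q // (j : ℕ) < p} :=
    (Equiv.ofInjective σ hσinj).symm.trans e2
  let e : Equiv.Perm (Fin q) := e0.extendSubtype
  have he : ∀ k, e (σ k) = Fin.castLE hpq k := by
    intro k
    rw [show e (σ k) = e0.extendSubtype (σ k) from rfl,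
      Equiv.extendSubtype_apply_of_mem e0 (σ k) ⟨k, rfl⟩]
    have h0 : (Equiv.ofInjective σ hσinj).symm ⟨σ k, ⟨k, rfl⟩⟩ = k := by
      rw [Equiv.symm_apply_eq]
      rfl
    show ((e2 ((Equiv.ofInjective σ hσinj).symm ⟨σ k, ⟨k, rfl⟩⟩)) : Fin q) = Fin.castLE hpq k
    rw [h0]
    rfl
  have hdom : ∀ k : Fin p, (u ∘ e.symm) (Fin.castLE hpq k) ≤ v k := by
    intro k
    have hsymm : e.symm (Fin.castLE hpq k) = σ k := (Equiv.symm_apply_eq e).mpr (he k).symm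
    show u (e.symm (Fin.castLE hpq k)) ≤ v k
    rw [hsymm]
    exact hσle k
  have hrange : Set.range (u ∘ e.symm) = Set.range u :=
    Function.Surjective.range_comp e.symm.surjective u
  have hMne : (upSet (Set.range u) \ upSet (Set.range v)).Nonempty := by
    obtain ⟨x, hx1, hx2⟩ := Set.exists_of_ssubset (ssubset_of_subset_of_ne hsub hne)
    exact ⟨x, hx1, hx2⟩
  have := S16.aux hq hn hqn hpq (u ∘ e.symm) v hdom (by rw [hrange]; exact hMne)
  rwa [hrange] at this
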